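/- arXiv:1505.04187 — 3 statements merged into one kernel-verified Lean document; each statement's English description precedes it below -/
import Mathlib

section
/- Let φ : X → H be weakly measurable. Then: (i) φ is μ-total if and only if the range of T̂_φ is dense in H; (ii) if V_φ(X,μ) is a Hilbert space (complete), then the range of T̂_φ equals H if and only if φ is μ-total. -/
open MeasureTheory Filter Topology
open scoped Classical ENNReal NNReal

noncomputable section

variable {H : Type*} [NormedAddCommGroup H] [InnerProductSpace ℂ H] [CompleteSpace H]
  [TopologicalSpace.SeparableSpace H]
variable {X : Type*} [TopologicalSpace X] [LocallyCompactSpace X] [MeasurableSpace X]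
  [BorelSpace X]

/-- Notation for the Mathlib inner product (conjugate-linear in the first slot);
the paper's inner product `⟨f, g⟩` (linear in the first slot) is `⟪g, f⟫`. -/
local notation "⟪" x ", " y "⟫" => @inner ℂ _ _ x y

/-- `φ : X → H` is weakly measurable: `x ↦ ⟨f, φ x⟩` is measurable for every `f ∈ H`. -/
def WeaklyMeasurable (φ : X → H) : Prop :=
  ∀ f : H, Measurable fun x => ⟪φ x, f⟫

/-- `ξ ∈ 𝒱_φ(X,μ)`: `ξ` is measurable, the integral `∫ ξ(x) ⟨φ(x), g⟩ dμ(x)` exists for all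
`g ∈ H`, and it defines a bounded conjugate-linear functional of `g`. -/
def MemV (μ : Measure X) (φ : X → H) (ξ : X → ℂ) : Prop :=
  Measurable ξ ∧ (∀ g : H, Integrable (fun x => ξ x * ⟪g, φ x⟫) μ) ∧
    ∃ c : ℝ, ∀ g : H, ‖∫ x, ξ x * ⟪g, φ x⟫ ∂μ‖ ≤ c * ‖g‖

/-- The map `T_φ : 𝒱_φ(X,μ) → H`, determined weakly by
`⟨T_φ ξ, g⟩ = ∫ ξ(x) ⟨φ(x), g⟩ dμ(x)` for all `g ∈ H` (junk value `0` off `𝒱_φ`). -/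
def Tmap (μ : Measure X) (φ : X → H) (ξ : X → ℂ) : H :=
  if h : MemV μ φ ξ then
    have key : ∀ g : H, Integrable (fun x => (starRingEnd ℂ) (ξ x) * ⟪φ x, g⟫) μ := by
      intro g
      have h2 : Integrable (fun x => (RCLike.conjLIE : ℂ ≃ₗᵢ[ℝ] ℂ) (ξ x * ⟪g, φ x⟫)) μ :=
        ((RCLike.conjLIE : ℂ ≃ₗᵢ[ℝ] ℂ).integrable_comp_iff).2 (h.2.1 g)
      simpa [RCLike.conjLIE_apply, map_mul] using h2
    (InnerProductSpace.toDual ℂ H).symm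
      (LinearMap.mkContinuousOfExistsBound
        { toFun := fun g => ∫ x, (starRingEnd ℂ) (ξ x) * ⟪φ x, g⟫ ∂μ
          map_add' := fun g g' => by
            simp only [inner_add_right, mul_add]
            exact integral_add (key g) (key g')
          map_smul' := fun c g => by
            simp only [inner_smul_right, RingHom.id_apply]
            calc ∫ x, (starRingEnd ℂ) (ξ x) * (c * ⟪φ x, g⟫) ∂μ
                = ∫ x, c * ((starRingEnd ℂ) (ξ x) * ⟪φ x, g⟫) ∂μ := by
                  simp only [mul_left_comm]
              _ = c * ∫ x, (starRingEnd ℂ) (ξ x) * ⟪φ x, g⟫ ∂μ := integral_const_mul _ _ }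
        (by
          obtain ⟨c, hc⟩ := h.2.2
          refine ⟨c, fun g => ?_⟩
          have he : ∫ x, (starRingEnd ℂ) (ξ x) * ⟪φ x, g⟫ ∂μ
              = (starRingEnd ℂ) (∫ x, ξ x * ⟪g, φ x⟫ ∂μ) := by
            rw [← integral_conj]
            congr 1; funext x
            simp [map_mul]
          simp only [LinearMap.coe_mk, AddHom.coe_mk]
          rw [he, RCLike.norm_conj]
          exact hc g))
  else 0

/-- The norm `‖[ξ]_φ‖_φ = sup_{‖g‖ ≤ 1} |∫ ξ(x) ⟨φ(x), g⟩ dμ(x)|` (computed on a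
representative; it only depends on the class `[ξ]_φ = ξ + Ker T_φ`). -/
def Vnorm (μ : Measure X) (φ : X → H) (ξ : X → ℂ) : ℝ :=
  ⨆ g : {g : H // ‖g‖ ≤ 1}, ‖∫ x, ξ x * ⟪(g : H), φ x⟫ ∂μ‖

/-- The range of `T̂_φ : V_φ(X,μ) → H` (equivalently, of `T_φ` on `𝒱_φ(X,μ)`). -/
def Tran (μ : Measure X) (φ : X → H) : Set H := Tmap μ φ '' {ξ | MemV μ φ ξ}

/-- The analysis coefficient map: `(C_ψ f)(x) = ⟨f, ψ(x)⟩`. -/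
def Cpsi (ψ : X → H) (f : H) : X → ℂ := fun x => ⟪ψ x, f⟫

/-- `φ` is `μ`-total: `Ker C_φ = {0}`, i.e. if `∫ ξ(x) ⟨φ(x), f⟩ dμ(x) = 0` for every
`ξ ∈ 𝒱_φ(X,μ)`, then `f = 0`. -/
def MuTotal (μ : Measure X) (φ : X → H) : Prop :=
  ∀ f : H, (∀ ξ, MemV μ φ ξ → ∫ x, ξ x * ⟪f, φ x⟫ ∂μ = 0) → f = 0

/-- `S : H ≃L[ℂ] H` represents the sesquilinear form `Ω_{ψ,φ}`:
`⟨S f, g⟩ = ∫ ⟨f, ψ(x)⟩ ⟨φ(x), g⟩ dμ(x)` for all `f, g ∈ H`. -/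
def IsAnalysisOp (μ : Measure X) (ψ φ : X → H) (S : H ≃L[ℂ] H) : Prop :=
  ∀ f g : H, ⟪g, S f⟫ = ∫ x, ⟪ψ x, f⟫ * ⟪g, φ x⟫ ∂μ

/-- `(ψ, φ)` is a reproducing pair: both weakly measurable, the form
`Ω_{ψ,φ}(f,g) = ∫ ⟨f,ψ(x)⟩⟨φ(x),g⟩ dμ(x)` is well defined (integrable) and bounded, and the
associated bounded operator `S_{ψ,φ}` has a bounded everywhere-defined inverse. -/
def IsReproducingPair (μ : Measure X) (ψ φ : X → H) : Prop :=
  WeaklyMeasurable ψ ∧ WeaklyMeasurable φ ∧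
    (∀ f g : H, Integrable (fun x => ⟪ψ x, f⟫ * ⟪g, φ x⟫) μ) ∧
    ∃ S : H ≃L[ℂ] H, IsAnalysisOp μ ψ φ S

/-- Completeness of `V_φ(X,μ)` in the norm `‖·‖_φ`, phrased via representatives:
every `‖·‖_φ`-Cauchy sequence of elements of `𝒱_φ(X,μ)` converges in `‖·‖_φ`
to an element of `𝒱_φ(X,μ)`. -/
def VComplete (μ : Measure X) (φ : X → H) : Prop :=
  ∀ ξ : ℕ → X → ℂ, (∀ n, MemV μ φ (ξ n)) →
    (∀ ε : ℝ, 0 < ε → ∃ N, ∀ m ≥ N, ∀ n ≥ N, Vnorm μ φ (ξ m - ξ n) < ε) →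
    ∃ η, MemV μ φ η ∧ Tendsto (fun n => Vnorm μ φ (ξ n - η)) atTop (𝓝 0)

/-- `F` is (induced by) a bounded linear functional on `V_φ(X,μ)`: it is linear on `𝒱_φ(X,μ)`,
constant on the classes of `V_φ(X,μ) = 𝒱_φ(X,μ)/Ker T_φ`, and bounded for `‖·‖_φ`. -/
def IsBddLinearFunctional (μ : Measure X) (φ : X → H) (F : (X → ℂ) → ℂ) : Prop :=
  (∀ ξ η, MemV μ φ ξ → MemV μ φ η → F (ξ + η) = F ξ + F η) ∧
  (∀ (c : ℂ) ξ, MemV μ φ ξ → F (c • ξ) = c * F ξ) ∧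
  (∀ ξ η, MemV μ φ ξ → MemV μ φ η → Tmap μ φ (ξ - η) = 0 → F ξ = F η) ∧
  ∃ c : ℝ, ∀ ξ, MemV μ φ ξ → ‖F ξ‖ ≤ c * Vnorm μ φ ξ

/-- The dual norm `‖F‖_{φ*} = sup_{‖[ξ]_φ‖_φ ≤ 1} |F([ξ]_φ)|`. -/
def DualNorm (μ : Measure X) (φ : X → H) (F : (X → ℂ) → ℂ) : ℝ :=
  ⨆ ξ : {ξ : X → ℂ // MemV μ φ ξ ∧ Vnorm μ φ ξ ≤ 1}, ‖F ξ.1‖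

/-- `V_φ(X,μ)` and `V_ψ(X,μ)` are conjugate dual to each other with respect to the pairing
`⟨⟨ξ, η⟩⟩ = ∫ ξ(x) conj(η(x)) dμ(x)`: the pairing is well defined, each class `[η]_ψ` gives a
bounded linear functional on `V_φ(X,μ)`, and `[η]_ψ ↦ ⟨⟨·, η⟩⟩` is a bijection from `V_ψ(X,μ)`
onto the dual of `V_φ(X,μ)`. -/
def ConjDual (μ : Measure X) (φ ψ : X → H) : Prop :=
  (∀ ξ η, MemV μ φ ξ → MemV μ ψ η →
      Integrable (fun x => ξ x * (starRingEnd ℂ) (η x)) μ) ∧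
  (∀ η, MemV μ ψ η →
      IsBddLinearFunctional μ φ (fun ξ => ∫ x, ξ x * (starRingEnd ℂ) (η x) ∂μ)) ∧
  (∀ η η', MemV μ ψ η → MemV μ ψ η' →
      (∀ ξ, MemV μ φ ξ →
        ∫ x, ξ x * (starRingEnd ℂ) (η x) ∂μ = ∫ x, ξ x * (starRingEnd ℂ) (η' x) ∂μ) →
      Tmap μ ψ (η - η') = 0) ∧
  (∀ F, IsBddLinearFunctional μ φ F →
      ∃ η, MemV μ ψ η ∧ ∀ ξ, MemV μ φ ξ → F ξ = ∫ x, ξ x * (starRingEnd ℂ) (η x) ∂μ)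

section Aux

variable (μ : Measure X) (φ : X → H)

lemma memV_integrable_conj {ξ : X → ℂ} (h : MemV μ φ ξ) (g : H) :
    Integrable (fun x => (starRingEnd ℂ) (ξ x) * ⟪φ x, g⟫) μ := by
  have h2 : Integrable (fun x => (RCLike.conjLIE : ℂ ≃ₗᵢ[ℝ] ℂ) (ξ x * ⟪g, φ x⟫)) μ :=
    ((RCLike.conjLIE : ℂ ≃ₗᵢ[ℝ] ℂ).integrable_comp_iff).2 (h.2.1 g)
  simpa [RCLike.conjLIE_apply, map_mul] using h2

lemma inner_Tmap {ξ : X → ℂ} (h : MemV μ φ ξ) (g : H) :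
    ⟪Tmap μ φ ξ, g⟫ = ∫ x, (starRingEnd ℂ) (ξ x) * ⟪φ x, g⟫ ∂μ := by
  rw [Tmap, dif_pos h]
  rw [InnerProductSpace.toDual_symm_apply]
  rfl

lemma inner_Tmap' {ξ : X → ℂ} (h : MemV μ φ ξ) (g : H) :
    ⟪g, Tmap μ φ ξ⟫ = ∫ x, ξ x * ⟪g, φ x⟫ ∂μ := by
  rw [← inner_conj_symm, inner_Tmap μ φ h, ← integral_conj]
  congr 1; funext x; simp [map_mul]

lemma MemV.zero : MemV μ φ (0 : X → ℂ) :=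
  ⟨measurable_zero, fun g => by simpa using integrable_zero X ℂ μ,
    ⟨0, fun g => by simp⟩⟩

lemma MemV.add {ξ η : X → ℂ} (h1 : MemV μ φ ξ) (h2 : MemV μ φ η) :
    MemV μ φ (ξ + η) := by
  obtain ⟨c1, hc1⟩ := h1.2.2
  obtain ⟨c2, hc2⟩ := h2.2.2
  refine ⟨h1.1.add h2.1, fun g => ?_, ⟨c1 + c2, fun g => ?_⟩⟩
  · simpa [add_mul, Pi.add_def] using (h1.2.1 g).add (h2.2.1 g)
  · have : ∫ x, (ξ + η) x * ⟪g, φ x⟫ ∂μ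
        = (∫ x, ξ x * ⟪g, φ x⟫ ∂μ) + ∫ x, η x * ⟪g, φ x⟫ ∂μ := by
      rw [← integral_add (h1.2.1 g) (h2.2.1 g)]
      congr 1; funext x; simp [add_mul]
    rw [this, add_mul]
    exact (norm_add_le _ _).trans (add_le_add (hc1 g) (hc2 g))

lemma MemV.smul {ξ : X → ℂ} (c : ℂ) (h : MemV μ φ ξ) :
    MemV μ φ (c • ξ) := by
  obtain ⟨c1, hc1⟩ := h.2.2
  refine ⟨h.1.const_smul c, fun g => ?_, ⟨‖c‖ * c1, fun g => ?_⟩⟩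
  · simpa [mul_assoc] using (h.2.1 g).const_mul c
  · have : ∫ x, (c • ξ) x * ⟪g, φ x⟫ ∂μ = c * ∫ x, ξ x * ⟪g, φ x⟫ ∂μ := by
      rw [← integral_const_mul]
      congr 1; funext x; simp [mul_assoc]
    rw [this, norm_mul, mul_assoc]
    exact mul_le_mul_of_nonneg_left (hc1 g) (norm_nonneg c)

lemma Tmap_add {ξ η : X → ℂ} (h1 : MemV μ φ ξ) (h2 : MemV μ φ η) :
    Tmap μ φ (ξ + η) = Tmap μ φ ξ + Tmap μ φ η := by
  apply ext_inner_right ℂ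
  intro g
  rw [inner_Tmap μ φ (h1.add μ φ h2), inner_add_left, inner_Tmap μ φ h1, inner_Tmap μ φ h2,
    ← integral_add (memV_integrable_conj μ φ h1 g) (memV_integrable_conj μ φ h2 g)]
  congr 1; funext x; simp [add_mul]

lemma Tmap_smul {ξ : X → ℂ} (c : ℂ) (h : MemV μ φ ξ) :
    Tmap μ φ (c • ξ) = c • Tmap μ φ ξ := by
  apply ext_inner_right ℂ
  intro g
  rw [inner_Tmap μ φ (MemV.smul μ φ c h), inner_smul_left, inner_Tmap μ φ h,
    ← integral_const_mul]
  congr 1; funext x; simp [map_mul]; ring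

lemma MemV.sub {ξ η : X → ℂ} (h1 : MemV μ φ ξ) (h2 : MemV μ φ η) :
    MemV μ φ (ξ - η) := by
  have := h1.add μ φ (MemV.smul μ φ (-1) h2)
  simpa [sub_eq_add_neg, neg_one_smul] using this

lemma Tmap_sub {ξ η : X → ℂ} (h1 : MemV μ φ ξ) (h2 : MemV μ φ η) :
    Tmap μ φ (ξ - η) = Tmap μ φ ξ - Tmap μ φ η := by
  have h2' := MemV.smul μ φ (-1 : ℂ) h2
  have := Tmap_add μ φ h1 h2'
  rw [Tmap_smul μ φ (-1 : ℂ) h2] at this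
  simpa [sub_eq_add_neg, neg_one_smul] using this

/-- The range of `T̂_φ` as a submodule of `H`. -/
def Tsub : Submodule ℂ H where
  carrier := Tran μ φ
  zero_mem' := ⟨0, MemV.zero μ φ, by
    apply ext_inner_right ℂ
    intro g
    rw [inner_Tmap μ φ (MemV.zero μ φ)]
    simp⟩
  add_mem' := by
    rintro a b ⟨ξ, hξ, rfl⟩ ⟨η, hη, rfl⟩
    exact ⟨ξ + η, hξ.add μ φ hη, Tmap_add μ φ hξ hη⟩
  smul_mem' := by
    rintro c a ⟨ξ, hξ, rfl⟩
    exact ⟨c • ξ, MemV.smul μ φ c hξ, Tmap_smul μ φ c hξ⟩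

lemma iSup_inner_norm (v : H) :
    ⨆ g : {g : H // ‖g‖ ≤ 1}, ‖⟪v, (g : H)⟫‖ = ‖v‖ := by
  haveI : Nonempty {g : H // ‖g‖ ≤ 1} := ⟨⟨0, by simp⟩⟩
  have hbdd : BddAbove (Set.range fun g : {g : H // ‖g‖ ≤ 1} => ‖⟪v, (g : H)⟫‖) := by
    refine ⟨‖v‖, ?_⟩
    rintro r ⟨g, rfl⟩
    exact (norm_inner_le_norm v g).trans (by
      have := g.2
      nlinarith [norm_nonneg v, norm_nonneg (g : H)])
  refine le_antisymm ?_ ?_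
  · refine ciSup_le fun g => ?_
    exact (norm_inner_le_norm v g).trans (by
      have := g.2
      nlinarith [norm_nonneg v, norm_nonneg (g : H)])
  · rcases eq_or_ne v 0 with rfl | hv
    · simpa using le_ciSup hbdd (⟨0, by simp⟩ : {g : H // ‖g‖ ≤ 1})
    · have hvn : ‖v‖ ≠ 0 := norm_ne_zero_iff.2 hv
      have hg : ‖((‖v‖ : ℂ)⁻¹ • v : H)‖ ≤ 1 := by
        rw [norm_smul]
        simp [hvn]
      have := le_ciSup hbdd (⟨(‖v‖ : ℂ)⁻¹ • v, hg⟩ : {g : H // ‖g‖ ≤ 1})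
      refine le_trans (le_of_eq ?_) this
      rw [inner_smul_right, inner_self_eq_norm_sq_to_K, norm_mul, norm_inv]
      simp only [Complex.norm_real, norm_pow, norm_norm]
      field_simp
      ring
      simp [Complex.norm_real]

lemma Vnorm_eq {ξ : X → ℂ} (h : MemV μ φ ξ) :
    Vnorm μ φ ξ = ‖Tmap μ φ ξ‖ := by
  rw [Vnorm, ← iSup_inner_norm (Tmap μ φ ξ)]
  congr 1; funext g
  rw [← inner_Tmap' μ φ h, ← inner_conj_symm, RCLike.norm_conj]

end Aux

/-- Let `φ : X → H` be weakly measurable. Then (i) `φ` is `μ`-total iff the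
range of `T̂_φ` is dense in `H`; (ii) if `V_φ(X,μ)` is a Hilbert space (complete), then the
range of `T̂_φ` equals `H` iff `φ` is `μ`-total. -/
theorem statement2 (μ : Measure X) [μ.Regular] (φ : X → H) (hφ : WeaklyMeasurable φ) :
    (MuTotal μ φ ↔ Dense (Tran μ φ)) ∧
    (VComplete μ φ → (Tran μ φ = Set.univ ↔ MuTotal μ φ)) := by
  classical
  have key : ∀ f : H, f ∈ (Tsub μ φ)ᗮ ↔
      (∀ ξ, MemV μ φ ξ → ∫ x, ξ x * ⟪f, φ x⟫ ∂μ = 0) := by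
    intro f
    rw [Submodule.mem_orthogonal]
    constructor
    · intro hf ξ hξ
      have := hf (Tmap μ φ ξ) ⟨ξ, hξ, rfl⟩
      rw [← inner_conj_symm, inner_Tmap' μ φ hξ] at this
      simpa using congrArg (starRingEnd ℂ) this
    · rintro hf u ⟨ξ, hξ, rfl⟩
      rw [← inner_conj_symm, inner_Tmap' μ φ hξ, hf ξ hξ, map_zero]
  have keyiff : MuTotal μ φ ↔ Dense (Tran μ φ) := by
    constructor
    · intro ht
      have hbot : (Tsub μ φ)ᗮ = ⊥ := by
        rw [Submodule.eq_bot_iff]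
        intro f hf
        exact ht f ((key f).1 hf)
      have htop := (Submodule.topologicalClosure_eq_top_iff (K := Tsub μ φ)).2 hbot
      have : closure (Tran μ φ) = Set.univ := by
        have := congrArg (fun K : Submodule ℂ H => (K : Set H)) htop
        simpa [Submodule.topologicalClosure_coe, show ((Tsub μ φ : Submodule ℂ H) : Set H) = Tran μ φ from rfl] using this
      rw [dense_iff_closure_eq]
      exact this
    · intro hd f hf
      have hbot : (Tsub μ φ)ᗮ = ⊥ := by
        rw [← Submodule.topologicalClosure_eq_top_iff]
        apply SetLike.ext'
        rw [Submodule.topologicalClosure_coe]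
        simpa [Submodule.top_coe, show ((Tsub μ φ : Submodule ℂ H) : Set H) = Tran μ φ from rfl] using dense_iff_closure_eq.1 hd
      have : f ∈ (Tsub μ φ)ᗮ := (key f).2 hf
      rw [hbot] at this
      simpa using this
  refine ⟨keyiff, fun hc => ⟨fun htop => ?_, fun htot => ?_⟩⟩
  · exact keyiff.2 (by rw [htop]; exact dense_univ)
  · have hd : Dense (Tran μ φ) := keyiff.1 htot
    rw [Set.eq_univ_iff_forall]
    intro f
    have hfc : f ∈ closure (Tran μ φ) := hd f
    obtain ⟨u, hu, hlim⟩ := mem_closure_iff_seq_limit.1 hfc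
    choose ξ hξ hTξ using hu
    have hcauchy : ∀ ε : ℝ, 0 < ε → ∃ N, ∀ m ≥ N, ∀ n ≥ N,
        Vnorm μ φ (ξ m - ξ n) < ε := by
      intro ε hε
      obtain ⟨N, hN⟩ := Metric.cauchySeq_iff.1 hlim.cauchySeq ε hε
      refine ⟨N, fun m hm n hn => ?_⟩
      have := hN m hm n hn
      rw [Vnorm_eq μ φ ((hξ m).sub μ φ (hξ n)), Tmap_sub μ φ (hξ m) (hξ n), hTξ m, hTξ n]
      rwa [dist_eq_norm] at this
    obtain ⟨η, hη, hηlim⟩ := hc ξ hξ hcauchy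
    have hnorm : ∀ n, Vnorm μ φ (ξ n - η) = ‖u n - Tmap μ φ η‖ := by
      intro n
      rw [Vnorm_eq μ φ ((hξ n).sub μ φ hη), Tmap_sub μ φ (hξ n) hη, hTξ n]
    have : Tendsto u atTop (𝓝 (Tmap μ φ η)) := by
      rw [tendsto_iff_norm_sub_tendsto_zero]
      simpa [hnorm] using hηlim
    have hfe : f = Tmap μ φ η := tendsto_nhds_unique hlim this
    exact hfe ▸ ⟨η, hη, rfl⟩
end
end

section
/- Let (ψ,φ) be a reproducing pair of weakly measurable functions X → H. Then the range of Ĉ_{ψ,φ} (i.e. the set of classes [⟨f,ψ(·)⟩]_φ, f ∈ H) is dense in V_φ(X,μ) with respect to ‖·‖_φ. -/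
open MeasureTheory Filter Topology
open scoped Classical ENNReal NNReal

noncomputable section

variable {H : Type*} [NormedAddCommGroup H] [InnerProductSpace ℂ H] [CompleteSpace H]
  [TopologicalSpace.SeparableSpace H]
variable {X : Type*} [TopologicalSpace X] [LocallyCompactSpace X] [MeasurableSpace X]
  [BorelSpace X]

/-- Notation for the Mathlib inner product (conjugate-linear in the first slot);
the paper's inner product `⟨f, g⟩` (linear in the first slot) is `⟪g, f⟫`. -/
local notation "⟪" x ", " y "⟫" => @inner ℂ _ _ x y

lemma inner_Tmap_aux (μ : Measure X) (φ : X → H) (ξ : X → ℂ) (hξ : MemV μ φ ξ) (g : H) :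
    ⟪Tmap μ φ ξ, g⟫ = ∫ x, (starRingEnd ℂ) (ξ x) * ⟪φ x, g⟫ ∂μ := by
  rw [Tmap, dif_pos hξ, InnerProductSpace.toDual_symm_apply]
  rfl

lemma inner_Tmap_aux' (μ : Measure X) (φ : X → H) (ξ : X → ℂ) (hξ : MemV μ φ ξ) (g : H) :
    ⟪g, Tmap μ φ ξ⟫ = ∫ x, ξ x * ⟪g, φ x⟫ ∂μ := by
  rw [← inner_conj_symm, inner_Tmap_aux μ φ ξ hξ g, ← integral_conj]
  congr 1; funext x
  simp [map_mul]

/-- Let `(ψ,φ)` be a reproducing pair. Then the range of `Ĉ_{ψ,φ}`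
(the set of classes `[⟨f,ψ(·)⟩]_φ`, `f ∈ H`) is dense in `V_φ(X,μ)` for `‖·‖_φ`. -/
theorem statement10 (μ : Measure X) [μ.Regular] (ψ φ : X → H)
    (h : IsReproducingPair μ ψ φ) :
    ∀ ξ, MemV μ φ ξ → ∀ ε : ℝ, 0 < ε → ∃ f : H, Vnorm μ φ (Cpsi ψ f - ξ) < ε := by
  intro ξ hξ ε hε
  obtain ⟨hψm, hφm, hint, S, hS⟩ := h
  refine ⟨S.symm (Tmap μ φ ξ), ?_⟩
  have hzero : ∀ g : H, ∫ x, (Cpsi ψ (S.symm (Tmap μ φ ξ)) - ξ) x * ⟪g, φ x⟫ ∂μ = 0 := by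
    intro g
    have h1 : ∫ x, (Cpsi ψ (S.symm (Tmap μ φ ξ)) - ξ) x * ⟪g, φ x⟫ ∂μ
        = (∫ x, ⟪ψ x, S.symm (Tmap μ φ ξ)⟫ * ⟪g, φ x⟫ ∂μ) - ∫ x, ξ x * ⟪g, φ x⟫ ∂μ := by
      rw [← integral_sub (hint _ g) (hξ.2.1 g)]
      congr 1; funext x
      simp [Cpsi, sub_mul]
    rw [h1, ← hS (S.symm (Tmap μ φ ξ)) g, ← inner_Tmap_aux' μ φ ξ hξ g]
    simp
  have : Vnorm μ φ (Cpsi ψ (S.symm (Tmap μ φ ξ)) - ξ) = 0 := by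
    have : Nonempty {g : H // ‖g‖ ≤ 1} := ⟨⟨0, by simp⟩⟩
    rw [Vnorm]
    have : ∀ g : {g : H // ‖g‖ ≤ 1},
        ‖∫ x, (Cpsi ψ (S.symm (Tmap μ φ ξ)) - ξ) x * ⟪(g : H), φ x⟫ ∂μ‖ = 0 := by
      intro g; rw [hzero]; simp
    simp only [this]
    exact ciSup_const
  rw [this]; exact hε
end
end

section
/- Let (ψ,φ) be a reproducing pair of weakly measurable functions X → H, and let θ : X → H be weakly measurable. Then (θ,φ) is a reproducing pair if and only if θ = Aψ + θ₀, i.e. θ(x) = Aψ(x) + θ₀(x) for a.e. x, where A ∈ GL(H) (a bounded operator on H with bounded everywhere-defined inverse) and θ₀ : X → H is weakly measurable with [⟨f,θ₀(·)⟩]_φ = [0]_φ for every f ∈ H (equivalently, Ĉ_{θ₀,φ}f = 0 for all f ∈ H). -/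
open MeasureTheory Filter Topology
open scoped Classical ENNReal NNReal

noncomputable section

variable {H : Type*} [NormedAddCommGroup H] [InnerProductSpace ℂ H] [CompleteSpace H]
  [TopologicalSpace.SeparableSpace H]
variable {X : Type*} [TopologicalSpace X] [LocallyCompactSpace X] [MeasurableSpace X]
  [BorelSpace X]

/-- Notation for the Mathlib inner product (conjugate-linear in the first slot);
the paper's inner product `⟨f, g⟩` (linear in the first slot) is `⟪g, f⟫`. -/
local notation "⟪" x ", " y "⟫" => @inner ℂ _ _ x y

/-- The inner product of `Tmap μ φ ξ` with `g`. -/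
lemma Tmap_inner' (μ : Measure X) (φ : X → H) (ξ : X → ℂ) (h : MemV μ φ ξ) (g : H) :
    ⟪Tmap μ φ ξ, g⟫ = ∫ x, (starRingEnd ℂ) (ξ x) * ⟪φ x, g⟫ ∂μ := by
  rw [Tmap, dif_pos h, InnerProductSpace.toDual_symm_apply]
  rfl

lemma conj_integral_eq (μ : Measure X) (φ : X → H) (ξ : X → ℂ) (g : H) :
    ∫ x, (starRingEnd ℂ) (ξ x) * ⟪φ x, g⟫ ∂μ
      = (starRingEnd ℂ) (∫ x, ξ x * ⟪g, φ x⟫ ∂μ) := by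
  rw [← integral_conj]
  congr 1; funext x
  simp [map_mul]

/-- If `Tmap μ φ ξ = 0` then the defining integrals vanish. -/
lemma integral_eq_zero_of_Tmap (μ : Measure X) (φ : X → H) (ξ : X → ℂ) (h : MemV μ φ ξ)
    (h0 : Tmap μ φ ξ = 0) (g : H) : ∫ x, ξ x * ⟪g, φ x⟫ ∂μ = 0 := by
  have := Tmap_inner' μ φ ξ h g
  rw [h0, inner_zero_left, conj_integral_eq] at this
  simpa using this.symm

/-- The adjoint of a continuous linear equivalence, as a continuous linear equivalence. -/
def adjointEquiv (B : H ≃L[ℂ] H) : H ≃L[ℂ] H :=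
  ContinuousLinearEquiv.equivOfInverse
    (ContinuousLinearMap.adjoint (B : H →L[ℂ] H))
    (ContinuousLinearMap.adjoint (B.symm : H →L[ℂ] H))
    (fun x => by
      have h1 : (ContinuousLinearMap.adjoint (B.symm : H →L[ℂ] H)).comp
          (ContinuousLinearMap.adjoint (B : H →L[ℂ] H)) = ContinuousLinearMap.id ℂ H := by
        rw [← ContinuousLinearMap.adjoint_comp]
        have h2 : ((B : H →L[ℂ] H) ∘L (B.symm : H →L[ℂ] H)) = ContinuousLinearMap.id ℂ H := by
          ext y; simp
        rw [h2, ContinuousLinearMap.adjoint_id]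
      simpa using DFunLike.congr_fun h1 x)
    (fun x => by
      have h1 : (ContinuousLinearMap.adjoint (B : H →L[ℂ] H)).comp
          (ContinuousLinearMap.adjoint (B.symm : H →L[ℂ] H)) = ContinuousLinearMap.id ℂ H := by
        rw [← ContinuousLinearMap.adjoint_comp]
        have h2 : ((B.symm : H →L[ℂ] H) ∘L (B : H →L[ℂ] H)) = ContinuousLinearMap.id ℂ H := by
          ext y; simp
        rw [h2, ContinuousLinearMap.adjoint_id]
      simpa using DFunLike.congr_fun h1 x)

lemma adjointEquiv_apply (B : H ≃L[ℂ] H) (x : H) :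
    adjointEquiv B x = ContinuousLinearMap.adjoint (B : H →L[ℂ] H) x := rfl

/-- Let `(ψ,φ)` be a reproducing pair and `θ` weakly measurable. Then
`(θ,φ)` is a reproducing pair iff `θ = Aψ + θ₀` (a.e.) with `A ∈ GL(H)` and `θ₀` weakly
measurable satisfying `[⟨f,θ₀(·)⟩]_φ = [0]_φ` (i.e. `Ĉ_{θ₀,φ}f = 0`) for every `f ∈ H`. -/
theorem statement17 (μ : Measure X) [μ.Regular] (ψ φ θ : X → H)
    (h : IsReproducingPair μ ψ φ) (hθ : WeaklyMeasurable θ) :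
    IsReproducingPair μ θ φ ↔
      ∃ (A : H ≃L[ℂ] H) (θ₀ : X → H), WeaklyMeasurable θ₀ ∧
        (∀ f : H, MemV μ φ (Cpsi θ₀ f) ∧ Tmap μ φ (Cpsi θ₀ f) = 0) ∧
        ∀ᵐ x ∂μ, θ x = A (ψ x) + θ₀ x := by
  obtain ⟨hψm, hφm, hint, S, hS⟩ := h
  constructor
  · rintro ⟨hθm, -, hintθ, Sθ, hSθ⟩
    set B : H ≃L[ℂ] H := Sθ.trans S.symm with hB
    refine ⟨adjointEquiv B, fun x => θ x - adjointEquiv B (ψ x), ?_, ?_, ?_⟩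
    · intro f
      have : (fun x => ⟪θ x - adjointEquiv B (ψ x), f⟫)
          = fun x => ⟪θ x, f⟫ - ⟪ψ x, B f⟫ := by
        funext x
        rw [inner_sub_left, adjointEquiv_apply, ContinuousLinearMap.adjoint_inner_left]
        rfl
      rw [this]
      exact (hθm f).sub (hψm (B f))
    · intro f
      have hfun : ∀ g : H, (fun x => Cpsi (fun x => θ x - adjointEquiv B (ψ x)) f x * ⟪g, φ x⟫)
          = fun x => ⟪θ x, f⟫ * ⟪g, φ x⟫ - ⟪ψ x, B f⟫ * ⟪g, φ x⟫ := by
        intro g; funext x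
        rw [Cpsi, inner_sub_left, adjointEquiv_apply, ContinuousLinearMap.adjoint_inner_left,
          sub_mul]
        rfl
      have hintf : ∀ g : H,
          Integrable (fun x => Cpsi (fun x => θ x - adjointEquiv B (ψ x)) f x * ⟪g, φ x⟫) μ := by
        intro g; rw [hfun g]; exact (hintθ f g).sub (hint (B f) g)
      have hzero : ∀ g : H,
          ∫ x, Cpsi (fun x => θ x - adjointEquiv B (ψ x)) f x * ⟪g, φ x⟫ ∂μ = 0 := by
        intro g
        rw [hfun g, integral_sub (hintθ f g) (hint (B f) g), ← hSθ f g, ← hS (B f) g]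
        have : S (B f) = Sθ f := by simp [hB]
        rw [this, sub_self]
      have hmeas : Measurable (Cpsi (fun x => θ x - adjointEquiv B (ψ x)) f) := by
        have : Cpsi (fun x => θ x - adjointEquiv B (ψ x)) f
            = fun x => ⟪θ x, f⟫ - ⟪ψ x, B f⟫ := by
          funext x
          rw [Cpsi, inner_sub_left, adjointEquiv_apply, ContinuousLinearMap.adjoint_inner_left]
          rfl
        rw [this]; exact (hθm f).sub (hψm (B f))
      have hmem : MemV μ φ (Cpsi (fun x => θ x - adjointEquiv B (ψ x)) f) :=
        ⟨hmeas, hintf, ⟨0, fun g => by rw [hzero g]; simp⟩⟩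
      refine ⟨hmem, ?_⟩
      refine ext_inner_right ℂ fun g => ?_
      rw [Tmap_inner' μ φ _ hmem g, conj_integral_eq, hzero g, map_zero, inner_zero_left]
    · filter_upwards with x
      simp
  · rintro ⟨A, θ₀, hθ₀m, hmem, hae⟩
    have hAi : ∀ f g : H, (fun x => ⟪θ x, f⟫ * ⟪g, φ x⟫) =ᵐ[μ]
        fun x => ⟪ψ x, ContinuousLinearMap.adjoint (A : H →L[ℂ] H) f⟫ * ⟪g, φ x⟫
          + Cpsi θ₀ f x * ⟪g, φ x⟫ := by
      intro f g
      filter_upwards [hae] with x hx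
      rw [hx, inner_add_left, add_mul, Cpsi, ContinuousLinearMap.adjoint_inner_right]
      rfl
    have hintθ : ∀ f g : H, Integrable (fun x => ⟪θ x, f⟫ * ⟪g, φ x⟫) μ := by
      intro f g
      exact (((hint _ g).add ((hmem f).1.2.1 g)).congr (hAi f g).symm)
    refine ⟨hθ, hφm, hintθ, (adjointEquiv A).trans S, fun f g => ?_⟩
    have h1 : ∫ x, ⟪θ x, f⟫ * ⟪g, φ x⟫ ∂μ
        = ∫ x, (⟪ψ x, ContinuousLinearMap.adjoint (A : H →L[ℂ] H) f⟫ * ⟪g, φ x⟫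
            + Cpsi θ₀ f x * ⟪g, φ x⟫) ∂μ := integral_congr_ae (hAi f g)
    rw [h1, integral_add (hint _ g) ((hmem f).1.2.1 g),
      integral_eq_zero_of_Tmap μ φ _ (hmem f).1 (hmem f).2 g, add_zero, ← hS _ g]
    rfl
end
end
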